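/- Let M_1, …, M_k be matroids on the same finite ground set E, where |E| > 1. Suppose there exist sets V_1, …, V_k ⊆ E such that V_i is independent in M_i for each i and V_1 ∪ … ∪ V_k = E, and suppose that the rank functions satisfy r_1(A) + … + r_k(A) > |A| for every nonempty proper subset A ⊊ E. Then for every element e ∈ E and every index j such that {e} is independent in M_j, there exist sets W_1, …, W_k with W_1 ∪ … ∪ W_k = E \ {e}, such that W_i is independent in M_i for every i ≠ j, and W_j ∪ {e} is independent in M_j. -/

import Mathlib

/-- The rank of a set `A` in the matroid `M`: the largest cardinality of an independent
subset of `A`. -/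
noncomputable def rankFun {α : Type*} (M : Matroid α) (A : Set α) : ℕ :=
  sSup {n : ℕ | ∃ I, I ⊆ A ∧ M.Indep I ∧ I.ncard = n}

/-- `I` is independent in the contraction `M/A` (the matroid on `M.E \ A` whose rank
function is `B ↦ rankFun M (A ∪ B) - rankFun M A`): that is, `I ⊆ M.E \ A` and the rank of
`I` in `M/A` equals its cardinality. -/
def IndepInContract {α : Type*} (M : Matroid α) (A I : Set α) : Prop :=
  I ⊆ M.E \ A ∧ rankFun M (A ∪ I) = rankFun M A + I.ncard

namespace RadoAux

variable {α : Type*}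

lemma rankSet_bddAbove (M : Matroid α) (hM : M.E.Finite) (A : Set α) :
    BddAbove {n : ℕ | ∃ I, I ⊆ A ∧ M.Indep I ∧ I.ncard = n} := by
  refine ⟨M.E.ncard, ?_⟩
  rintro n ⟨I, hIA, hI, rfl⟩
  exact Set.ncard_le_ncard hI.subset_ground hM

lemma rankSet_nonempty (M : Matroid α) (A : Set α) :
    Set.Nonempty {n : ℕ | ∃ I, I ⊆ A ∧ M.Indep I ∧ I.ncard = n} :=
  ⟨0, ∅, Set.empty_subset A, M.empty_indep, Set.ncard_empty α⟩

lemma ncard_le_rankFun (M : Matroid α) (hM : M.E.Finite) {I A : Set α}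
    (hIA : I ⊆ A) (hI : M.Indep I) : I.ncard ≤ rankFun M A :=
  le_csSup (rankSet_bddAbove M hM A) ⟨I, hIA, hI, rfl⟩

lemma rankFun_exists (M : Matroid α) (hM : M.E.Finite) (A : Set α) :
    ∃ I, I ⊆ A ∧ M.Indep I ∧ I.ncard = rankFun M A :=
  Nat.sSup_mem (rankSet_nonempty M A) (rankSet_bddAbove M hM A)

lemma rankFun_mono (M : Matroid α) (hM : M.E.Finite) {A B : Set α} (h : A ⊆ B) :
    rankFun M A ≤ rankFun M B := by
  obtain ⟨I, hIA, hI, hcard⟩ := rankFun_exists M hM A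
  rw [← hcard]; exact ncard_le_rankFun M hM (hIA.trans h) hI

lemma rankFun_le_ncard (M : Matroid α) (hM : M.E.Finite) {A : Set α} (hA : A.Finite) :
    rankFun M A ≤ A.ncard := by
  obtain ⟨I, hIA, hI, hcard⟩ := rankFun_exists M hM A
  rw [← hcard]; exact Set.ncard_le_ncard hIA hA

lemma rankFun_of_indep (M : Matroid α) (hM : M.E.Finite) {A : Set α} (hA : M.Indep A) :
    rankFun M A = A.ncard :=
  le_antisymm (rankFun_le_ncard M hM (hM.subset hA.subset_ground))
    (ncard_le_rankFun M hM subset_rfl hA)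

lemma indep_of_ncard_le (M : Matroid α) (hM : M.E.Finite) {A : Set α} (hA : A ⊆ M.E)
    (h : A.ncard ≤ rankFun M A) : M.Indep A := by
  obtain ⟨I, hIA, hI, hcard⟩ := rankFun_exists M hM A
  have : I = A := Set.eq_of_subset_of_ncard_le hIA (by omega) (hM.subset hA)
  exact this ▸ hI

lemma rankFun_basis (M : Matroid α) (hM : M.E.Finite) {A I : Set α} (hA : A ⊆ M.E)
    (hI : M.IsBasis I A) : rankFun M A = I.ncard := by
  refine le_antisymm ?_ (ncard_le_rankFun M hM hI.subset hI.indep)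
  obtain ⟨J, hJA, hJ, hcard⟩ := rankFun_exists M hM A
  rw [← hcard]
  obtain ⟨J', hJ', hJJ'⟩ := hJ.subset_isBasis_of_subset hJA hA
  have h1 : J'.encard = I.encard := hJ'.encard_eq_encard hI
  have hJ'fin : J'.Finite := hM.subset hJ'.indep.subset_ground
  calc J.ncard ≤ J'.ncard := Set.ncard_le_ncard hJJ' hJ'fin
    _ = I.ncard := by rw [Set.ncard_def, h1, ← Set.ncard_def]

lemma rankFun_submodular (M : Matroid α) (hM : M.E.Finite) {A B : Set α} (hA : A ⊆ M.E)
    (hB : B ⊆ M.E) :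
    rankFun M (A ∪ B) + rankFun M (A ∩ B) ≤ rankFun M A + rankFun M B := by
  obtain ⟨I, hI⟩ := M.exists_isBasis (A ∩ B) (Set.inter_subset_left.trans hA)
  obtain ⟨J, hJ, hIJ⟩ := hI.indep.subset_isBasis_of_subset
    (hI.subset.trans (Set.inter_subset_left.trans Set.subset_union_left))
    (Set.union_subset hA hB)
  have hJfin : J.Finite := hM.subset hJ.indep.subset_ground
  have h1 : rankFun M (A ∪ B) = J.ncard := rankFun_basis M hM (Set.union_subset hA hB) hJ
  have h2 : rankFun M (A ∩ B) = I.ncard :=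
    rankFun_basis M hM (Set.inter_subset_left.trans hA) hI
  have h3 : (J ∩ A).ncard ≤ rankFun M A :=
    ncard_le_rankFun M hM Set.inter_subset_right (hJ.indep.subset Set.inter_subset_left)
  have h4 : (J ∩ B).ncard ≤ rankFun M B :=
    ncard_le_rankFun M hM Set.inter_subset_right (hJ.indep.subset Set.inter_subset_left)
  have h5 : (J ∩ A).ncard + (J ∩ B).ncard = J.ncard + (J ∩ (A ∩ B)).ncard := by
    have hu : (J ∩ A) ∪ (J ∩ B) = J := by
      rw [← Set.inter_union_distrib_left]
      exact Set.inter_eq_self_of_subset_left hJ.subset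
    have hi : (J ∩ A) ∩ (J ∩ B) = J ∩ (A ∩ B) := by ext x; simp; tauto
    have := Set.ncard_union_add_ncard_inter (J ∩ A) (J ∩ B)
      (hJfin.subset Set.inter_subset_left) (hJfin.subset Set.inter_subset_left)
    rw [hu, hi] at this
    omega
  have h6 : I.ncard ≤ (J ∩ (A ∩ B)).ncard :=
    Set.ncard_le_ncard (Set.subset_inter hIJ hI.subset) (hJfin.subset Set.inter_subset_left)
  omega

end RadoAux


namespace RadoAux

variable {α : Type*} [DecidableEq α]

/-- Base case of the Rado-style induction: every availability set is a (sub)singleton. -/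
lemma rado_base {k : ℕ} (ρ : Fin k → Set α → ℕ) (S : Finset α)
    (hzero : ∀ i, ρ i ∅ = 0) (A : α → Finset (Fin k))
    (hA : ∀ s ∈ S, (A s).card ≤ 1)
    (hcond : ∀ T : Finset α, T ⊆ S →
      T.card ≤ ∑ i, ρ i ↑(T.filter (fun s => i ∈ A s))) :
    ∃ W : Fin k → Finset α, (∀ s ∈ S, ∃ i, s ∈ W i) ∧
      ∀ i, W i ⊆ S ∧ (W i).card ≤ ρ i ↑(W i) := by
  classical
  refine ⟨fun i => S.filter (fun s => A s = {i}), ?_, ?_⟩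
  · intro s hs
    have h1 : 1 ≤ ∑ i, ρ i ↑(({s} : Finset α).filter (fun t => i ∈ A t)) := by
      simpa using hcond {s} (Finset.singleton_subset_iff.mpr hs)
    have hne : (A s).Nonempty := by
      by_contra hno
      rw [Finset.not_nonempty_iff_eq_empty] at hno
      have : ∀ i : Fin k, ({s} : Finset α).filter (fun t => i ∈ A t) = ∅ := by
        intro i
        ext t
        simp only [Finset.mem_filter, Finset.mem_singleton, Finset.notMem_empty, iff_false,
          not_and]
        rintro rfl
        simp [hno]
      simp only [this] at h1
      simp [hzero] at h1
    obtain ⟨i, hi⟩ := Finset.card_eq_one.mp (le_antisymm (hA s hs) hne.card_pos)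
    exact ⟨i, Finset.mem_filter.mpr ⟨hs, hi⟩⟩
  · intro i
    refine ⟨Finset.filter_subset _ _, ?_⟩
    set W := S.filter (fun s => A s = {i}) with hW
    have hfib : ∀ i' : Fin k, W.filter (fun s => i' ∈ A s) =
        if i' = i then W else ∅ := by
      intro i'
      split_ifs with h
      · subst h
        apply Finset.filter_true_of_mem
        intro s hs
        rw [hW, Finset.mem_filter] at hs
        simp [hs.2]
      · apply Finset.filter_false_of_mem
        intro s hs
        rw [hW, Finset.mem_filter] at hs
        simp [hs.2, h]
    have := hcond W (Finset.filter_subset _ _)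
    calc W.card ≤ ∑ i', ρ i' ↑(W.filter (fun s => i' ∈ A s)) := this
      _ = ρ i ↑W := by
          rw [Finset.sum_eq_single_of_mem i (Finset.mem_univ i)]
          · rw [hfib i, if_pos rfl]
          · intro b _ hb
            rw [hfib b, if_neg hb]
            simpa using hzero b

/-- Rado-style induction. -/
lemma rado {k : ℕ} (ρ : Fin k → Set α → ℕ) (S : Finset α)
    (hmono : ∀ i (A B : Set α), A ⊆ B → B ⊆ ↑S → ρ i A ≤ ρ i B)
    (hsub : ∀ i (A B : Set α), A ⊆ ↑S → B ⊆ ↑S →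
      ρ i (A ∪ B) + ρ i (A ∩ B) ≤ ρ i A + ρ i B)
    (hzero : ∀ i, ρ i ∅ = 0) :
    ∀ n (A : α → Finset (Fin k)), (∑ s ∈ S, (A s).card) ≤ n →
      (∀ T : Finset α, T ⊆ S →
        T.card ≤ ∑ i, ρ i ↑(T.filter (fun s => i ∈ A s))) →
      ∃ W : Fin k → Finset α, (∀ s ∈ S, ∃ i, s ∈ W i) ∧
        ∀ i, W i ⊆ S ∧ (W i).card ≤ ρ i ↑(W i) := by
  classical
  intro n
  induction n with
  | zero =>
    intro A hsum hcond
    refine rado_base ρ S hzero A (fun s hs => ?_) hcond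
    have : (A s).card = 0 :=
      Nat.eq_zero_of_le_zero (le_trans (Finset.single_le_sum (f := fun s => (A s).card)
        (fun _ _ => Nat.zero_le _) hs) hsum)
    omega
  | succ n ih =>
    intro A hsum hcond
    by_cases hbase : ∀ s ∈ S, (A s).card ≤ 1
    · exact rado_base ρ S hzero A hbase hcond
    push_neg at hbase
    obtain ⟨s0, hs0S, hs0⟩ := hbase
    obtain ⟨i1, hi1, i2, hi2, hne⟩ := Finset.one_lt_card.mp hs0
    -- two candidate reductions
    have hsum' : ∀ i' ∈ A s0,
        ∑ s ∈ S, ((Function.update A s0 ((A s0).erase i')) s).card ≤ n := by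
      intro i' hi'
      have h1 : ∑ s ∈ S.erase s0, ((Function.update A s0 ((A s0).erase i')) s).card
          = ∑ s ∈ S.erase s0, (A s).card := by
        apply Finset.sum_congr rfl
        intro s hs
        rw [Function.update_of_ne (Finset.mem_erase.mp hs).1]
      have h2 := Finset.sum_erase_add S
        (fun s => ((Function.update A s0 ((A s0).erase i')) s).card) hs0S
      have h3 := Finset.sum_erase_add S (fun s => (A s).card) hs0S
      have h4 : ((Function.update A s0 ((A s0).erase i')) s0).card = (A s0).card - 1 := by
        rw [Function.update_self, Finset.card_erase_of_mem hi']
      omega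
    set A1 := Function.update A s0 ((A s0).erase i1) with hA1
    set A2 := Function.update A s0 ((A s0).erase i2) with hA2
    by_cases h1 : ∀ T : Finset α, T ⊆ S →
        T.card ≤ ∑ i, ρ i ↑(T.filter (fun s => i ∈ A1 s))
    · exact ih A1 (hsum' i1 hi1) h1
    by_cases h2 : ∀ T : Finset α, T ⊆ S →
        T.card ≤ ∑ i, ρ i ↑(T.filter (fun s => i ∈ A2 s))
    · exact ih A2 (hsum' i2 hi2) h2
    exfalso
    push_neg at h1 h2
    obtain ⟨T1, hT1S, hT1⟩ := h1
    obtain ⟨T2, hT2S, hT2⟩ := h2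
    have hs0mem : ∀ (A' : α → Finset (Fin k)) (T : Finset α), T ⊆ S →
        A' = Function.update A s0 ((A s0).erase i1) ∨
        A' = Function.update A s0 ((A s0).erase i2) →
        (∑ i, ρ i ↑(T.filter (fun s => i ∈ A' s)) < T.card) → s0 ∈ T := by
      intro A' T hTS hA' hlt
      by_contra hs0T
      have : ∀ i : Fin k, T.filter (fun s => i ∈ A' s) = T.filter (fun s => i ∈ A s) := by
        intro i
        apply Finset.filter_congr
        intro s hs
        have hss0 : s ≠ s0 := fun h => hs0T (h ▸ hs)
        rcases hA' with rfl | rfl <;> rw [Function.update_of_ne hss0]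
      rw [show (∑ i, ρ i ↑(T.filter (fun s => i ∈ A' s)))
          = ∑ i, ρ i ↑(T.filter (fun s => i ∈ A s)) from
        Finset.sum_congr rfl (fun i _ => by rw [this i])] at hlt
      exact absurd (hcond T hTS) (not_le.mpr hlt)
    have hs0T1 : s0 ∈ T1 := hs0mem A1 T1 hT1S (Or.inl rfl) hT1
    have hs0T2 : s0 ∈ T2 := hs0mem A2 T2 hT2S (Or.inr rfl) hT2
    -- fiber identities
    have hU : ∀ i : Fin k,
        (T1.filter (fun s => i ∈ A1 s)) ∪ (T2.filter (fun s => i ∈ A2 s))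
          = (T1 ∪ T2).filter (fun s => i ∈ A s) := by
      intro i
      ext s
      simp only [Finset.mem_union, Finset.mem_filter]
      rcases eq_or_ne s s0 with rfl | hss0
      · simp only [hA1, hA2, Function.update_self, Finset.mem_erase]
        constructor
        · rintro (⟨_, _, h⟩ | ⟨_, _, h⟩) <;> exact ⟨Or.inl hs0T1, h⟩
        · rintro ⟨-, h⟩
          rcases eq_or_ne i i1 with rfl | hii1
          · exact Or.inr ⟨hs0T2, hne, h⟩
          · exact Or.inl ⟨hs0T1, hii1, h⟩
      · simp only [hA1, hA2, Function.update_of_ne hss0]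
        tauto
    have hI : ∀ i : Fin k,
        ((T1 ∩ T2).erase s0).filter (fun s => i ∈ A s) ⊆
          (T1.filter (fun s => i ∈ A1 s)) ∩ (T2.filter (fun s => i ∈ A2 s)) := by
      intro i s hs
      simp only [Finset.mem_filter, Finset.mem_erase, Finset.mem_inter] at hs ⊢
      obtain ⟨⟨hss0, hsT1, hsT2⟩, hiA⟩ := hs
      simp only [hA1, hA2, Function.update_of_ne hss0]
      exact ⟨⟨hsT1, hiA⟩, hsT2, hiA⟩
    -- key inequality per index
    have key : ∀ i : Fin k,
        ρ i ↑((T1 ∪ T2).filter (fun s => i ∈ A s)) +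
          ρ i ↑(((T1 ∩ T2).erase s0).filter (fun s => i ∈ A s)) ≤
        ρ i ↑(T1.filter (fun s => i ∈ A1 s)) + ρ i ↑(T2.filter (fun s => i ∈ A2 s)) := by
      intro i
      have hB1S : ↑(T1.filter (fun s => i ∈ A1 s)) ⊆ (↑S : Set α) := by
        intro x hx
        simp only [Finset.coe_filter, Set.mem_setOf_eq] at hx
        exact hT1S hx.1
      have hB2S : ↑(T2.filter (fun s => i ∈ A2 s)) ⊆ (↑S : Set α) := by
        intro x hx
        simp only [Finset.coe_filter, Set.mem_setOf_eq] at hx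
        exact hT2S hx.1
      have hsubm := hsub i ↑(T1.filter (fun s => i ∈ A1 s))
        ↑(T2.filter (fun s => i ∈ A2 s)) hB1S hB2S
      have e1 : (↑(T1.filter (fun s => i ∈ A1 s)) ∪ ↑(T2.filter (fun s => i ∈ A2 s)) : Set α)
          = ↑((T1 ∪ T2).filter (fun s => i ∈ A s)) := by
        rw [← Finset.coe_union, hU i]
      have e2 : ρ i ↑(((T1 ∩ T2).erase s0).filter (fun s => i ∈ A s)) ≤
          ρ i (↑(T1.filter (fun s => i ∈ A1 s)) ∩ ↑(T2.filter (fun s => i ∈ A2 s))) := by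
        apply hmono
        · rw [← Finset.coe_inter]
          exact Finset.coe_subset.mpr (hI i)
        · exact fun x hx => hB1S hx.1
      rw [e1] at hsubm
      omega
    have hc1 := hcond (T1 ∪ T2) (Finset.union_subset hT1S hT2S)
    have hc2 := hcond ((T1 ∩ T2).erase s0)
      ((Finset.erase_subset _ _).trans (Finset.inter_subset_left.trans hT1S))
    have hsumkey : ∑ i, (ρ i ↑((T1 ∪ T2).filter (fun s => i ∈ A s)) +
          ρ i ↑(((T1 ∩ T2).erase s0).filter (fun s => i ∈ A s))) ≤
        ∑ i, (ρ i ↑(T1.filter (fun s => i ∈ A1 s)) + ρ i ↑(T2.filter (fun s => i ∈ A2 s))) :=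
      Finset.sum_le_sum (fun i _ => key i)
    rw [Finset.sum_add_distrib, Finset.sum_add_distrib] at hsumkey
    have hcard1 := Finset.card_union_add_card_inter T1 T2
    have hcard2 : ((T1 ∩ T2).erase s0).card = (T1 ∩ T2).card - 1 :=
      Finset.card_erase_of_mem (Finset.mem_inter.mpr ⟨hs0T1, hs0T2⟩)
    have hcard3 : 1 ≤ (T1 ∩ T2).card :=
      Finset.card_pos.mpr ⟨s0, Finset.mem_inter.mpr ⟨hs0T1, hs0T2⟩⟩
    omega

end RadoAux

/-- Suppose `|E| > 1`, `E` is covered by sets `V i` independent in the respective matroids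
`M i`, and `∑ i, rᵢ(A) > |A|` for every nonempty proper subset `A ⊊ E`. Then for every
`e ∈ E` and every index `j` with `{e}` independent in `M j`, there are sets `W i` with
`W 0 ∪ … ∪ W (k-1) = E \ {e}` such that `W i` is independent in `M i` for every `i ≠ j`
and `W j ∪ {e}` is independent in `M j`. -/
theorem cover_after_first_move {α : Type*} {k : ℕ} (M : Fin k → Matroid α) (E : Set α)
    (hE : E.Finite) (hground : ∀ i, (M i).E = E) (hcard : 1 < E.ncard)
    (V : Fin k → Set α) (hV : ∀ i, (M i).Indep (V i)) (hcover : ⋃ i, V i = E)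
    (hstrict : ∀ A, A ⊆ E → A.Nonempty → A ≠ E → A.ncard < ∑ i, rankFun (M i) A)
    (e : α) (he : e ∈ E) (j : Fin k) (hej : (M j).Indep {e}) :
    ∃ W : Fin k → Set α, ⋃ i, W i = E \ {e} ∧ (∀ i, i ≠ j → (M i).Indep (W i)) ∧
      (M j).Indep (W j ∪ {e}) := by
  classical
  have hMfin : ∀ i, (M i).E.Finite := fun i => (hground i) ▸ hE
  set S : Finset α := hE.toFinset.erase e with hS
  have hScoe : (↑S : Set α) = E \ {e} := by
    rw [hS, Finset.coe_erase, Set.Finite.coe_toFinset]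
  have hSE : (↑S : Set α) ⊆ E := by rw [hScoe]; exact Set.diff_subset
  -- the rank functions of the modified matroid family
  let ρ : Fin k → Set α → ℕ :=
    fun i A => if i = j then rankFun (M j) (A ∪ {e}) - 1 else rankFun (M i) A
  have hρj : ∀ A : Set α, ρ j A = rankFun (M j) (A ∪ {e}) - 1 := fun A => if_pos rfl
  have hρi : ∀ (i : Fin k), i ≠ j → ∀ A : Set α, ρ i A = rankFun (M i) A :=
    fun i hi A => if_neg hi
  have hrone : ∀ A : Set α, rankFun (M j) {e} ≤ rankFun (M j) (A ∪ {e}) :=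
    fun A => RadoAux.rankFun_mono (M j) (hMfin j) Set.subset_union_right
  have hrsing : rankFun (M j) {e} = 1 := by
    rw [RadoAux.rankFun_of_indep (M j) (hMfin j) hej, Set.ncard_singleton]
  have hmono : ∀ i (A B : Set α), A ⊆ B → B ⊆ ↑S → ρ i A ≤ ρ i B := by
    intro i A B hAB _
    by_cases hij : i = j
    · subst hij
      rw [hρj A, hρj B]
      exact Nat.sub_le_sub_right
        (RadoAux.rankFun_mono (M i) (hMfin i) (Set.union_subset_union_left _ hAB)) 1
    · rw [hρi i hij A, hρi i hij B]
      exact RadoAux.rankFun_mono (M i) (hMfin i) hAB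
  have hsub : ∀ i (A B : Set α), A ⊆ ↑S → B ⊆ ↑S →
      ρ i (A ∪ B) + ρ i (A ∩ B) ≤ ρ i A + ρ i B := by
    intro i A B hAS hBS
    by_cases hij : i = j
    · subst hij
      rw [hρj A, hρj B, hρj (A ∪ B), hρj (A ∩ B)]
      have hAe : A ∪ {e} ⊆ (M i).E := by
        rw [hground]; exact Set.union_subset (hAS.trans hSE) (Set.singleton_subset_iff.mpr he)
      have hBe : B ∪ {e} ⊆ (M i).E := by
        rw [hground]; exact Set.union_subset (hBS.trans hSE) (Set.singleton_subset_iff.mpr he)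
      have hsubm := RadoAux.rankFun_submodular (M i) (hMfin i) hAe hBe
      have hu : (A ∪ {e}) ∪ (B ∪ {e}) = (A ∪ B) ∪ {e} := by ext x; simp; tauto
      have hi : (A ∪ {e}) ∩ (B ∪ {e}) = (A ∩ B) ∪ {e} := by ext x; simp; tauto
      rw [hu, hi] at hsubm
      have h1 : 1 ≤ rankFun (M i) (A ∪ {e}) := hrsing ▸ hrone A
      have h2 : 1 ≤ rankFun (M i) (B ∪ {e}) := hrsing ▸ hrone B
      have h3 : 1 ≤ rankFun (M i) (A ∪ B ∪ {e}) := hrsing ▸ hrone (A ∪ B)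
      have h4 : 1 ≤ rankFun (M i) (A ∩ B ∪ {e}) := hrsing ▸ hrone (A ∩ B)
      omega
    · rw [hρi i hij A, hρi i hij B, hρi i hij (A ∪ B), hρi i hij (A ∩ B)]
      have hAE : A ⊆ (M i).E := by rw [hground]; exact hAS.trans hSE
      have hBE : B ⊆ (M i).E := by rw [hground]; exact hBS.trans hSE
      exact RadoAux.rankFun_submodular (M i) (hMfin i) hAE hBE
  have hzero : ∀ i, ρ i ∅ = 0 := by
    intro i
    by_cases hij : i = j
    · subst hij
      rw [hρj ∅, Set.empty_union, hrsing]
    · rw [hρi i hij ∅,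
        RadoAux.rankFun_of_indep (M i) (hMfin i) (M i).empty_indep, Set.ncard_empty]
  have hcond : ∀ T : Finset α, T ⊆ S →
      T.card ≤ ∑ i, ρ i ↑(T.filter (fun s => i ∈ (Finset.univ : Finset (Fin k)))) := by
    intro T hTS
    have hfilt : ∀ i : Fin k, T.filter (fun s => i ∈ (Finset.univ : Finset (Fin k))) = T := by
      intro i; simp
    rcases T.eq_empty_or_nonempty with rfl | hTne
    · simp
    have hTE : (↑T : Set α) ⊆ E := (Finset.coe_subset.mpr hTS).trans hSE
    have heT : e ∉ (↑T : Set α) := by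
      intro h
      have := (Finset.coe_subset.mpr hTS) h
      rw [hScoe] at this
      exact this.2 rfl
    have hTneE : (↑T : Set α) ≠ E := fun h => heT (h ▸ he)
    have hstr := hstrict ↑T hTE (by exact_mod_cast hTne) hTneE
    rw [Set.ncard_coe_finset] at hstr
    have hsplit1 := Finset.sum_erase_add Finset.univ
      (fun i => rankFun (M i) ↑T) (Finset.mem_univ j)
    have hsplit2 := Finset.sum_erase_add Finset.univ
      (fun i => ρ i ↑(T.filter (fun s => i ∈ (Finset.univ : Finset (Fin k)))))
      (Finset.mem_univ j)
    have heq : ∀ i ∈ Finset.univ.erase j,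
        ρ i ↑(T.filter (fun s => i ∈ (Finset.univ : Finset (Fin k)))) = rankFun (M i) ↑T := by
      intro i hi
      rw [hfilt i, hρi i (Finset.mem_erase.mp hi).1]
    rw [Finset.sum_congr rfl heq] at hsplit2
    have hj1 : ρ j ↑(T.filter (fun s => j ∈ (Finset.univ : Finset (Fin k))))
        = rankFun (M j) (↑T ∪ {e}) - 1 := by rw [hfilt j, hρj]
    have hmonoT : rankFun (M j) ↑T ≤ rankFun (M j) (↑T ∪ {e}) :=
      RadoAux.rankFun_mono (M j) (hMfin j) Set.subset_union_left
    omega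
  obtain ⟨W', hWcov, hW⟩ := RadoAux.rado ρ S hmono hsub hzero
    (∑ s ∈ S, (Finset.univ : Finset (Fin k)).card) (fun _ => Finset.univ) le_rfl hcond
  refine ⟨fun i => ↑(W' i), ?_, ?_, ?_⟩
  · apply Set.eq_of_subset_of_subset
    · refine Set.iUnion_subset fun i => ?_
      rw [← hScoe]
      exact Finset.coe_subset.mpr (hW i).1
    · intro x hx
      rw [← hScoe] at hx
      obtain ⟨i, hi⟩ := hWcov x hx
      exact Set.mem_iUnion.mpr ⟨i, hi⟩
  · intro i hij
    have hc := (hW i).2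
    rw [hρi i hij] at hc
    show (M i).Indep ↑(W' i)
    apply RadoAux.indep_of_ncard_le (M i) (hMfin i)
    · rw [hground]
      exact (Finset.coe_subset.mpr (hW i).1).trans hSE
    · rw [Set.ncard_coe_finset]
      exact hc
  · have hc := (hW j).2
    rw [hρj] at hc
    have hWS : (↑(W' j) : Set α) ⊆ E \ {e} := hScoe ▸ Finset.coe_subset.mpr (hW j).1
    have heW : e ∉ (↑(W' j) : Set α) := fun h => (hWS h).2 rfl
    show (M j).Indep (↑(W' j) ∪ {e})
    apply RadoAux.indep_of_ncard_le (M j) (hMfin j)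
    · rw [hground]
      exact Set.union_subset (hWS.trans Set.diff_subset) (Set.singleton_subset_iff.mpr he)
    · have hncard : (↑(W' j) ∪ {e} : Set α).ncard = (W' j).card + 1 := by
        rw [Set.union_singleton, Set.ncard_insert_of_notMem heW (Set.toFinite _),
          Set.ncard_coe_finset]
      have hge1 : 1 ≤ rankFun (M j) (↑(W' j) ∪ {e}) := hrsing ▸ hrone _
      omega
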